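/- Let Ω be a nonempty open subset of ℝ^{n+1} (n ≥ 1) with nonempty topological boundary ∂Ω, let u(y) = dist(y, ∂Ω), and let 0 < s < t. Then there exist countably many compact sets U_j (j ∈ ℕ) covering Γ_s^t, and constants C_j > 0, such that the normal map N (N(y) = (z−x)/t for the configuration (x, z) of y, i.e. N(y) = ∇u(y)) satisfies ‖N(y₁) − N(y₂)‖ ≤ C_j ‖y₁ − y₂‖ for all y₁, y₂ ∈ U_j. In other words, N is Lipschitz on the pieces of a countable compact decomposition of Γ_s^t. -/

import Mathlib

open RealInnerProductSpace Metric Set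

set_option maxHeartbeats 1000000 in
lemma key_ineq {E : Type*} [NormedAddCommGroup E] [InnerProductSpace ℝ E]
    (s t : ℝ) (hs : 0 < s) (hst : s < t)
    (x₁ z₁ x₂ z₂ : E) (h₁ : ‖x₁ - z₁‖ = t) (h₂ : ‖x₂ - z₂‖ = t)
    (h₁₂ : t ≤ ‖z₁ - x₂‖) (h₂₁ : t ≤ ‖z₂ - x₁‖) :
    ‖t⁻¹ • (z₁ - x₁) - t⁻¹ • (z₂ - x₂)‖ ≤
      Real.sqrt (2/(s*(t-s)) + (t-2*s)^2/(s*(t-s))^2) *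
        ‖(x₁ + (s/t) • (z₁ - x₁)) - (x₂ + (s/t) • (z₂ - x₂))‖ := by
  have ht0 : (0:ℝ) < t := hs.trans hst
  have htne : t ≠ 0 := ht0.ne'
  have hα : (0:ℝ) < s*(t-s) := mul_pos hs (by linarith)
  set d : E := (x₁ + (s/t) • (z₁ - x₁)) - (x₂ + (s/t) • (z₂ - x₂)) with hd_def
  set Nd : E := t⁻¹ • (z₁ - x₁) - t⁻¹ • (z₂ - x₂) with hNd_def
  set a : ℝ := ‖Nd‖ with ha_def
  set b : ℝ := ‖d‖ with hb_def
  have hw₁ : ⟪z₁ - x₁, z₁ - x₁⟫ = t^2 := by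
    rw [real_inner_self_eq_norm_sq, norm_sub_rev, h₁]
  have hw₂ : ⟪z₂ - x₂, z₂ - x₂⟫ = t^2 := by
    rw [real_inner_self_eq_norm_sq, norm_sub_rev, h₂]
  have hA : t^2 ≤ ⟪z₁ - x₂, z₁ - x₂⟫ := by
    rw [real_inner_self_eq_norm_sq]; exact pow_le_pow_left₀ ht0.le h₁₂ 2
  have hB : t^2 ≤ ⟪z₂ - x₁, z₂ - x₁⟫ := by
    rw [real_inner_self_eq_norm_sq]; exact pow_le_pow_left₀ ht0.le h₂₁ 2
  have hdd : ⟪d, d⟫ = b^2 := by rw [real_inner_self_eq_norm_sq]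
  have hnn : ⟪Nd, Nd⟫ = a^2 := by rw [real_inner_self_eq_norm_sq]
  have hid : s*(t-s)*⟪Nd,Nd⟫ = ⟪d,d⟫ + (t-2*s)*⟪d,Nd⟫
      + (t^2 - ⟪z₁-x₂,z₁-x₂⟫)/2 + (t^2 - ⟪z₂-x₁,z₂-x₁⟫)/2 := by
    simp only [hd_def, hNd_def, inner_sub_left, inner_sub_right, inner_add_left,
      inner_add_right, real_inner_smul_left, real_inner_smul_right, real_inner_comm]
    simp only [inner_sub_left, inner_sub_right, real_inner_comm] at hw₁ hw₂
    field_simp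
    linear_combination t^2 * hw₁ + t^2 * hw₂
  clear_value d Nd a b
  rw [hdd, hnn] at hid
  have ha0 : 0 ≤ a := ha_def ▸ norm_nonneg Nd
  have hb0 : 0 ≤ b := hb_def ▸ norm_nonneg d
  have hip : |⟪d, Nd⟫| ≤ b * a := by
    rw [ha_def, hb_def]; exact abs_real_inner_le_norm d Nd
  have h1 : (t-2*s)*⟪d,Nd⟫ ≤ |t - 2*s| * (b * a) := by
    calc (t-2*s)*⟪d,Nd⟫ ≤ |(t - 2*s) * ⟪d,Nd⟫| := le_abs_self _
      _ = |t - 2*s| * |⟪d,Nd⟫| := abs_mul _ _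
      _ ≤ |t - 2*s| * (b * a) := mul_le_mul_of_nonneg_left hip (abs_nonneg _)
  have hmain : s*(t-s)*a^2 ≤ b^2 + |t - 2*s| * (b * a) := by linarith
  have hab : a^2*(s*(t-s))^2 ≤ (2*(s*(t-s)) + (t-2*s)^2)*b^2 := by
    have h2 : 2*(s*(t-s)) * (s*(t-s)*a^2) ≤ 2*(s*(t-s)) * (b^2 + |t - 2*s| * (b * a)) :=
      mul_le_mul_of_nonneg_left hmain (by linarith)
    have h3 : 0 ≤ (s*(t-s)*a - |t - 2*s| * b)^2 := sq_nonneg _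
    rw [show ((t-2*s)^2 : ℝ) = |t - 2*s|^2 from (sq_abs _).symm]
    linarith [h2, h3]
  have hKpos : (0:ℝ) < 2/(s*(t-s)) + (t-2*s)^2/(s*(t-s))^2 :=
    add_pos_of_pos_of_nonneg (div_pos two_pos hα) (div_nonneg (sq_nonneg _) (sq_nonneg _))
  have hgoal2 : a^2 ≤ (2/(s*(t-s)) + (t-2*s)^2/(s*(t-s))^2) * b^2 := by
    have he : (2/(s*(t-s)) + (t-2*s)^2/(s*(t-s))^2)
        = (2*(s*(t-s)) + (t-2*s)^2)/(s*(t-s))^2 := by field_simp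
    rw [he, div_mul_eq_mul_div, le_div_iff₀ (by positivity)]
    linarith [hab]
  calc a = Real.sqrt (a^2) := (Real.sqrt_sq ha0).symm
    _ ≤ Real.sqrt ((2/(s*(t-s)) + (t-2*s)^2/(s*(t-s))^2)*b^2) := Real.sqrt_le_sqrt hgoal2
    _ = Real.sqrt (2/(s*(t-s)) + (t-2*s)^2/(s*(t-s))^2) * b := by
        rw [Real.sqrt_mul hKpos.le, Real.sqrt_sq hb0]




/-- The normal map `N` is Lipschitz on the pieces of a countable compact decomposition
of `Γ_s^t`: there are compact sets `U_j ⊆ Γ_s^t` covering `Γ_s^t` and constants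
`C_j > 0` with `‖N(y₁) - N(y₂)‖ ≤ C_j ‖y₁ - y₂‖` on each `U_j`. -/
theorem stmt_11 (n : ℕ) (hn : 1 ≤ n)
    (Ω : Set (EuclideanSpace ℝ (Fin (n + 1))))
    (hΩopen : IsOpen Ω) (hΩne : Ω.Nonempty) (hfr : (frontier Ω).Nonempty)
    (u : EuclideanSpace ℝ (Fin (n + 1)) → ℝ)
    (hu : ∀ y, u y = Metric.infDist y (frontier Ω))
    (s t : ℝ) (hs : 0 < s) (hst : s < t) :
    ∃ (U : ℕ → Set (EuclideanSpace ℝ (Fin (n + 1)))) (C : ℕ → ℝ),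
      (∀ j, IsCompact (U j)) ∧ (∀ j, 0 < C j) ∧
      (∀ j, U j ⊆ {y | ∃ x z, x ∈ frontier Ω ∧ z ∈ Ω ∧ u z = t ∧ ‖x - z‖ = t ∧
        y = x + (s / t) • (z - x)}) ∧
      {y | ∃ x z, x ∈ frontier Ω ∧ z ∈ Ω ∧ u z = t ∧ ‖x - z‖ = t ∧
        y = x + (s / t) • (z - x)} ⊆ ⋃ j, U j ∧
      (∀ j, ∀ y₁ ∈ U j, ∀ y₂ ∈ U j,
        ∀ x₁ z₁ x₂ z₂ : EuclideanSpace ℝ (Fin (n + 1)),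
          (x₁ ∈ frontier Ω ∧ z₁ ∈ Ω ∧ u z₁ = t ∧ ‖x₁ - z₁‖ = t ∧
            y₁ = x₁ + (s / t) • (z₁ - x₁)) →
          (x₂ ∈ frontier Ω ∧ z₂ ∈ Ω ∧ u z₂ = t ∧ ‖x₂ - z₂‖ = t ∧
            y₂ = x₂ + (s / t) • (z₂ - x₂)) →
          ‖t⁻¹ • (z₁ - x₁) - t⁻¹ • (z₂ - x₂)‖ ≤ C j * ‖y₁ - y₂‖) := by
  classical
  have ht0 : (0:ℝ) < t := hs.trans hst
  set S : Set (EuclideanSpace ℝ (Fin (n + 1)) × EuclideanSpace ℝ (Fin (n + 1))) := {p : EuclideanSpace ℝ (Fin (n + 1)) × EuclideanSpace ℝ (Fin (n + 1)) | p.1 ∈ frontier Ω ∧ p.2 ∈ closure Ω ∧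
    infDist p.2 (frontier Ω) = t ∧ ‖p.1 - p.2‖ = t} with hS_def
  set F : EuclideanSpace ℝ (Fin (n + 1)) × EuclideanSpace ℝ (Fin (n + 1)) → EuclideanSpace ℝ (Fin (n + 1)) := fun p => p.1 + (s / t) • (p.2 - p.1) with hF_def
  have hFcont : Continuous F :=
    continuous_fst.add ((continuous_snd.sub continuous_fst).const_smul (s / t))
  have hSclosed : IsClosed S := by
    have h1 : IsClosed {p : EuclideanSpace ℝ (Fin (n + 1)) × EuclideanSpace ℝ (Fin (n + 1)) | p.1 ∈ frontier Ω} :=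
      isClosed_frontier.preimage continuous_fst
    have h2 : IsClosed {p : EuclideanSpace ℝ (Fin (n + 1)) × EuclideanSpace ℝ (Fin (n + 1)) | p.2 ∈ closure Ω} :=
      isClosed_closure.preimage continuous_snd
    have h3 : IsClosed {p : EuclideanSpace ℝ (Fin (n + 1)) × EuclideanSpace ℝ (Fin (n + 1)) | infDist p.2 (frontier Ω) = t} :=
      isClosed_eq ((continuous_infDist_pt (frontier Ω)).comp continuous_snd) continuous_const
    have h4 : IsClosed {p : EuclideanSpace ℝ (Fin (n + 1)) × EuclideanSpace ℝ (Fin (n + 1)) | ‖p.1 - p.2‖ = t} :=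
      isClosed_eq (continuous_fst.sub continuous_snd).norm continuous_const
    have : S = {p : EuclideanSpace ℝ (Fin (n + 1)) × EuclideanSpace ℝ (Fin (n + 1)) | p.1 ∈ frontier Ω} ∩ ({p : EuclideanSpace ℝ (Fin (n + 1)) × EuclideanSpace ℝ (Fin (n + 1)) | p.2 ∈ closure Ω} ∩
        ({p : EuclideanSpace ℝ (Fin (n + 1)) × EuclideanSpace ℝ (Fin (n + 1)) | infDist p.2 (frontier Ω) = t} ∩ {p : EuclideanSpace ℝ (Fin (n + 1)) × EuclideanSpace ℝ (Fin (n + 1)) | ‖p.1 - p.2‖ = t})) := rfl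
    rw [this]
    exact h1.inter (h2.inter (h3.inter h4))
  refine ⟨fun j => F '' (S ∩ ((closedBall (0:EuclideanSpace ℝ (Fin (n + 1))) (j+t)) ×ˢ (closedBall (0:EuclideanSpace ℝ (Fin (n + 1))) (j+t)))),
    fun _ => Real.sqrt (2/(s*(t-s)) + (t-2*s)^2/(s*(t-s))^2), ?_, ?_, ?_, ?_, ?_⟩
  · intro j
    refine IsCompact.image ?_ hFcont
    exact ((isCompact_closedBall _ _).prod (isCompact_closedBall _ _)).inter_left hSclosed
  · intro j
    apply Real.sqrt_pos.mpr
    have hα : (0:ℝ) < s*(t-s) := mul_pos hs (by linarith)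
    exact add_pos_of_pos_of_nonneg (div_pos two_pos hα)
      (div_nonneg (sq_nonneg _) (sq_nonneg _))
  · rintro j y ⟨⟨x, z⟩, ⟨⟨hx, hzc, hinf, hnorm⟩, -⟩, rfl⟩
    refine ⟨x, z, hx, ?_, ?_, hnorm, rfl⟩
    · -- z ∈ Ω
      have hznf : z ∉ frontier Ω := by
        intro hmem
        rw [infDist_zero_of_mem hmem] at hinf
        exact ht0.ne hinf
      have : z ∈ interior Ω := by
        by_contra hni
        exact hznf ⟨hzc, hni⟩
      rwa [hΩopen.interior_eq] at this
    · rw [hu]; exact hinf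
  · intro y hy
    obtain ⟨x, z, hx, hz, huz, hnorm, hy_eq⟩ := hy
    have hyx : y - x = (s/t) • (z - x) := by rw [hy_eq]; abel
    have hzy : z - y = ((t-s)/t) • (z - x) := by
      rw [hy_eq]
      rw [show ((t-s)/t : ℝ) = 1 - s/t by field_simp]
      rw [sub_smul, one_smul]
      abel
    have hzx : ‖z - x‖ = t := by rw [norm_sub_rev]; exact hnorm
    have hyxn : ‖y - x‖ = s := by
      rw [hyx, norm_smul, hzx, Real.norm_eq_abs, abs_of_pos (div_pos hs ht0)]
      field_simp
    have hzyn : ‖z - y‖ = t - s := by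
      rw [hzy, norm_smul, hzx, Real.norm_eq_abs,
        abs_of_pos (div_pos (by linarith) ht0)]
      field_simp
    refine mem_iUnion.mpr ⟨⌈‖y‖⌉₊, ⟨(x, z), ⟨⟨hx, subset_closure hz, by rw [← hu]; exact huz, hnorm⟩, ?_, ?_⟩, ?_⟩⟩
    · rw [mem_closedBall_zero_iff]
      have : ‖x‖ ≤ ‖y‖ + ‖y - x‖ := by
        calc ‖x‖ = ‖y - (y - x)‖ := by congr 1; abel
          _ ≤ ‖y‖ + ‖y - x‖ := norm_sub_le _ _
      have h2 : (‖y‖ : ℝ) ≤ ⌈‖y‖⌉₊ := Nat.le_ceil _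
      rw [hyxn] at this
      linarith
    · rw [mem_closedBall_zero_iff]
      have : ‖z‖ ≤ ‖y‖ + ‖z - y‖ := by
        calc ‖z‖ = ‖y + (z - y)‖ := by congr 1; abel
          _ ≤ ‖y‖ + ‖z - y‖ := norm_add_le _ _
      have h2 : (‖y‖ : ℝ) ≤ ⌈‖y‖⌉₊ := Nat.le_ceil _
      rw [hzyn] at this
      linarith
    · exact hy_eq.symm
  · rintro j y₁ - y₂ - x₁ z₁ x₂ z₂ ⟨hx₁, hz₁, hu₁, hn₁, rfl⟩ ⟨hx₂, hz₂, hu₂, hn₂, rfl⟩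
    have hi₁ : infDist z₁ (frontier Ω) = t := by rw [← hu]; exact hu₁
    have hi₂ : infDist z₂ (frontier Ω) = t := by rw [← hu]; exact hu₂
    have h₁₂ : t ≤ ‖z₁ - x₂‖ := by
      rw [← dist_eq_norm, ← hi₁]; exact infDist_le_dist_of_mem hx₂
    have h₂₁ : t ≤ ‖z₂ - x₁‖ := by
      rw [← dist_eq_norm, ← hi₂]; exact infDist_le_dist_of_mem hx₁
    exact key_ineq s t hs hst x₁ z₁ x₂ z₂ hn₁ hn₂ h₁₂ h₂₁
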